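/- arXiv:math/0110262 — 3 statements merged into one kernel-verified Lean document; each statement's English description precedes it below -/
import Mathlib

section
/- Let q be a prime power and E an elliptic curve over the finite field F_q. Then the sum, over the F_q-isomorphism classes [E'] of elliptic curves E' over F_q that become isomorphic to E over the algebraic closure, of 1/#Aut_{F_q}(E'), equals 1. -/
open WeierstrassCurve

/-- The `F̄_q/F_q`-forms of an elliptic curve `E` over `F_q`: elliptic curves over
`F_q` that become isomorphic to `E` over the algebraic closure. -/
def FormsOf {K : Type*} [Field K] (E : WeierstrassCurve K) : Type _ :=
  {W : WeierstrassCurve K // W.IsElliptic ∧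
    ∃ c : VariableChange (AlgebraicClosure K),
      c • W.baseChange (AlgebraicClosure K) = E.baseChange (AlgebraicClosure K)}

/-- `K`-isomorphism of forms: relation by an admissible change of variables over `K`. -/
def FormIsoRel {K : Type*} [Field K] (E : WeierstrassCurve K)
    (W W' : FormsOf E) : Prop :=
  ∃ c : VariableChange K, c • W.val = W'.val

/-- The group of `F_q`-automorphisms of an elliptic curve `W`, realized as the
changes of variables preserving `W`. -/
def AutEC {K : Type*} [CommRing K] (W : WeierstrassCurve K) : Type _ :=
  {c : VariableChange K // c • W = W}

set_option linter.unusedSectionVars false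
set_option maxHeartbeats 1000000

namespace MassAux
open Polynomial


instance finiteWC {R : Type*} [CommRing R] [Finite R] : Finite (WeierstrassCurve R) :=
  Finite.of_injective (fun W => (W.a₁, W.a₂, W.a₃, W.a₄, W.a₆)) (by
    intro W V h
    simp only [Prod.mk.injEq] at h
    exact WeierstrassCurve.ext h.1 h.2.1 h.2.2.1 h.2.2.2.1 h.2.2.2.2)

instance finiteVC {R : Type*} [CommRing R] [Finite R] : Finite (VariableChange R) :=
  Finite.of_injective (fun c => ((c.u : R), c.r, c.s, c.t)) (by
    intro c d h
    simp only [Prod.mk.injEq] at h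
    exact VariableChange.ext (Units.ext h.1) h.2.1 h.2.2.1 h.2.2.2)

lemma smul_def {R : Type*} [CommRing R] (c : VariableChange R) (W : WeierstrassCurve R) :
    c • W = c • W := rfl

lemma map_smul' {R A : Type*} [CommRing R] [CommRing A] (φ : R →+* A)
    (c : VariableChange R) (W : WeierstrassCurve R) :
    (c • W).map φ = (c.map φ) • (W.map φ) := (W.map_variableChange c φ).symm

section Frob

variable {K : Type*} [Field K] [Fintype K]

/-- the `q`-power Frobenius on any `K`-algebra domain of char p. -/
lemma exists_frobenius (L : Type*) [Field L] [Algebra K L] :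
    ∃ φ : L →+* L, ∀ x, φ x = x ^ Fintype.card K := by
  obtain ⟨p, hp⟩ := CharP.exists K
  haveI : CharP L p := charP_of_injective_algebraMap (algebraMap K L).injective p
  obtain ⟨n, hpn, hcard⟩ := FiniteField.card K p
  haveI : Fact p.Prime := ⟨hpn⟩
  haveI : ExpChar L p := ExpChar.prime hpn
  exact ⟨iterateFrobenius L p n, fun x => by rw [iterateFrobenius_def, hcard]⟩

variable {L : Type*} [Field L] [Algebra K L] {φ : L →+* L}
  (hφ : ∀ x, φ x = x ^ Fintype.card K)

include hφ

lemma frob_fix (x : K) : φ (algebraMap K L x) = algebraMap K L x := by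
  rw [hφ, ← map_pow, FiniteField.pow_card]

lemma frob_range {x : L} (hx : φ x = x) : x ∈ Set.range (algebraMap K L) := by
  classical
  set q := Fintype.card K with hq
  have hq2 : 1 < q := Fintype.one_lt_card
  -- the polynomial X^q - X has at most q roots; the image of K provides q of them
  set P : L[X] := X ^ q - X with hP
  have hdeg : P.degree = q := by
    rw [hP]
    have h1 : (X ^ q - X : L[X]).degree = (X ^ q : L[X]).degree :=
      degree_sub_eq_left_of_degree_lt (by
        rw [degree_X, degree_X_pow]; exact_mod_cast hq2)
    rw [h1, degree_X_pow]
  have hPne : P ≠ 0 := by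
    intro h0
    rw [h0, degree_zero] at hdeg
    exact (by simp at hdeg)
  have hroots : ∀ y : L, φ y = y → y ∈ P.roots.toFinset := by
    intro y hy
    rw [Multiset.mem_toFinset, mem_roots hPne]
    simp [hP, IsRoot, ← hφ y, hy]
  have himg : (Finset.univ.image (algebraMap K L)) ⊆ P.roots.toFinset := by
    intro y hy
    obtain ⟨a, _, rfl⟩ := Finset.mem_image.mp hy
    exact hroots _ (frob_fix hφ a)
  have hcard1 : q ≤ (Finset.univ.image (algebraMap K L)).card := by
    rw [Finset.card_image_of_injective _ (algebraMap K L).injective, Finset.card_univ]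
  have hcard2 : (P.roots.toFinset).card ≤ q := by
    refine le_trans (Multiset.toFinset_card_le _) ?_
    have := card_roots' P
    have hnd : P.natDegree = q := natDegree_eq_of_degree_eq_some hdeg
    omega
  have heq : (Finset.univ.image (algebraMap K L)) = P.roots.toFinset :=
    Finset.eq_of_subset_of_card_le himg (le_trans hcard2 hcard1)
  have := hroots x hx
  rw [← heq, Finset.mem_image] at this
  obtain ⟨a, _, ha⟩ := this
  exact ⟨a, ha⟩

end Frob



section Lang

variable {K : Type*} [Field K] [Fintype K] {L : Type*} [Field L] [Algebra K L]
  {φ : L →+* L} (hφ : ∀ x, φ x = x ^ Fintype.card K)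

include hφ in
lemma exists_AS [IsAlgClosed L] (γ : L) : ∃ x : L, φ x = x + γ := by
  set q := Fintype.card K with hq
  have hq2 : 1 < q := Fintype.one_lt_card
  have h1 : (X ^ q - X : L[X]).degree = q :=
    degree_sub_eq_left_of_degree_lt (by
      rw [degree_X, degree_X_pow]; exact_mod_cast hq2) |>.trans (degree_X_pow q)
  have h2 : (X ^ q - X - C γ : L[X]).degree = q := by
    rcases eq_or_ne γ 0 with rfl | hγ
    · simpa using h1
    · refine (degree_sub_eq_left_of_degree_lt ?_).trans h1
      rw [h1, degree_C hγ]
      exact_mod_cast (by omega : 0 < q)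
  obtain ⟨x, hx⟩ := IsAlgClosed.exists_root (X ^ q - X - C γ : L[X]) (by
    rw [h2]; exact_mod_cast (by omega : q ≠ 0))
  refine ⟨x, ?_⟩
  have := hx
  simp only [IsRoot, eval_sub, eval_pow, eval_X, eval_C, sub_eq_zero] at this
  rw [hφ]
  linear_combination this

include hφ in
omit hφ [Algebra K L] in
lemma exists_kummer [IsAlgClosed L] (α : L) (hα : α ≠ 0) :
    ∃ z : L, z ≠ 0 ∧ z ^ (Fintype.card K - 1) = α := by
  have hq2 : 1 < Fintype.card K := Fintype.one_lt_card
  obtain ⟨z, hz⟩ := IsAlgClosed.exists_root (X ^ (Fintype.card K - 1) - C α : L[X]) (by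
    rw [degree_X_pow_sub_C (by omega)]
    exact_mod_cast (by omega : Fintype.card K - 1 ≠ 0))
  simp only [IsRoot, eval_sub, eval_pow, eval_X, eval_C, sub_eq_zero] at hz
  refine ⟨z, fun h0 => hα ?_, hz⟩
  rw [h0, zero_pow (by omega)] at hz
  exact hz.symm

include hφ in
lemma lang [IsAlgClosed L] (a : VariableChange L) :
    ∃ c : VariableChange L, c.map φ = a * c := by
  have hq2 : 1 < Fintype.card K := Fintype.one_lt_card
  obtain ⟨z, hz0, hz⟩ := exists_kummer (K := K) (a.u : L) a.u.ne_zero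
  have hzq : φ z = (a.u : L) * z := by
    rw [hφ, ← hz, ← pow_succ]
    congr 1
    omega
  obtain ⟨r, hr⟩ := exists_AS hφ (a.r * z ^ 2)
  obtain ⟨s, hs⟩ := exists_AS hφ (z * a.s)
  obtain ⟨t, ht⟩ := exists_AS hφ (a.t * z ^ 3 + a.r * s * z ^ 2)
  refine ⟨⟨Units.mk0 z hz0, r, s, t⟩, ?_⟩
  refine VariableChange.ext (Units.ext ?_) ?_ ?_ ?_
  · show φ z = (a.u : L) * z
    exact hzq
  · show φ r = a.r * z ^ 2 + r
    rw [hr]; ring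
  · show φ s = z * a.s + s
    rw [hs]; ring
  · show φ t = a.t * z ^ 3 + a.r * s * z ^ 2 + t
    rw [ht]; ring

end Lang



variable {F : Type*} [Field F] (W : WeierstrassCurve F)

/-- polynomial whose roots contain the `u`-coordinate of any automorphism -/
noncomputable def PU : F[X] := X ^ 12 - C 1
/-- polynomial (depending on `u`) whose roots contain the `r`-coordinate -/
noncomputable def PR (u : F) : F[X] :=
  X ^ 4 - C W.b₄ * X ^ 2 - C ((2 + u ^ 6) * W.b₆) * X - C ((1 - u ^ 8) * W.b₈)
noncomputable def PS (u r : F) : F[X] := X ^ 2 + C W.a₁ * X + C (u ^ 2 * W.a₂ - W.a₂ - 3 * r)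
noncomputable def PT (u r : F) : F[X] :=
  X ^ 2 + C (W.a₃ + r * W.a₁) * X + C (u ^ 6 * W.a₆ - W.a₆ - r * W.a₄ - r ^ 2 * W.a₂ - r ^ 3)

lemma PU_ne : (PU : F[X]) ≠ 0 := X_pow_sub_C_ne_zero (by norm_num) 1

lemma PR_ne (u : F) : PR W u ≠ 0 := by
  have : (PR W u).Monic := by unfold PR; monicity!
  exact this.ne_zero

lemma PS_ne (u r : F) : PS W u r ≠ 0 := by
  have : (PS W u r).Monic := by unfold PS; monicity!
  exact this.ne_zero

lemma PT_ne (u r : F) : PT W u r ≠ 0 := by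
  have : (PT W u r).Monic := by unfold PT; monicity!
  exact this.ne_zero

lemma roots_of_aut (hΔ : W.Δ ≠ 0) (c : VariableChange F) (h : c • W = W) :
    (PU : F[X]).IsRoot (c.u : F) ∧ (PR W (c.u : F)).IsRoot c.r ∧
      (PS W (c.u : F) c.r).IsRoot c.s ∧ (PT W (c.u : F) c.r).IsRoot c.t := by
  set w : F := (c.u : F) with hw
  set v : F := ((c.u⁻¹ : Fˣ) : F) with hv
  have hvw : v * w = 1 := by exact_mod_cast c.u.inv_mul
  have hvwn : ∀ n : ℕ, v ^ n * w ^ n = 1 := fun n => by rw [← mul_pow, hvw, one_pow]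
  -- raw relations
  have eΔ : v ^ 12 * W.Δ = W.Δ := by conv_rhs => rw [← h, variableChange_Δ]
  have e6 : v ^ 6 * (W.b₆ + 2 * c.r * W.b₄ + c.r ^ 2 * W.b₂ + 4 * c.r ^ 3) = W.b₆ := by
    conv_rhs => rw [← h, variableChange_b₆]
  have e8 : v ^ 8 * (W.b₈ + 3 * c.r * W.b₆ + 3 * c.r ^ 2 * W.b₄ + c.r ^ 3 * W.b₂
      + 3 * c.r ^ 4) = W.b₈ := by
    conv_rhs => rw [← h, variableChange_b₈]
  have ea2 : v ^ 2 * (W.a₂ - c.s * W.a₁ + 3 * c.r - c.s ^ 2) = W.a₂ := by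
    conv_rhs => rw [← h, variableChange_a₂]
  have ea6 : v ^ 6 * (W.a₆ + c.r * W.a₄ + c.r ^ 2 * W.a₂ + c.r ^ 3 - c.t * W.a₃ - c.t ^ 2
      - c.r * c.t * W.a₁) = W.a₆ := by
    conv_rhs => rw [← h, variableChange_a₆]
  -- multiplied relations
  have T6 : w ^ 6 * W.b₆ = W.b₆ + 2 * c.r * W.b₄ + c.r ^ 2 * W.b₂ + 4 * c.r ^ 3 := by
    linear_combination (W.b₆ + 2 * c.r * W.b₄ + c.r ^ 2 * W.b₂ + 4 * c.r ^ 3) * hvwn 6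
      - w ^ 6 * e6
  have T8 : w ^ 8 * W.b₈ = W.b₈ + 3 * c.r * W.b₆ + 3 * c.r ^ 2 * W.b₄ + c.r ^ 3 * W.b₂
      + 3 * c.r ^ 4 := by
    linear_combination (W.b₈ + 3 * c.r * W.b₆ + 3 * c.r ^ 2 * W.b₄ + c.r ^ 3 * W.b₂
      + 3 * c.r ^ 4) * hvwn 8 - w ^ 8 * e8
  have Ta2 : w ^ 2 * W.a₂ = W.a₂ - c.s * W.a₁ + 3 * c.r - c.s ^ 2 := by
    linear_combination (W.a₂ - c.s * W.a₁ + 3 * c.r - c.s ^ 2) * hvwn 2 - w ^ 2 * ea2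
  have Ta6 : w ^ 6 * W.a₆ = W.a₆ + c.r * W.a₄ + c.r ^ 2 * W.a₂ + c.r ^ 3 - c.t * W.a₃
      - c.t ^ 2 - c.r * c.t * W.a₁ := by
    linear_combination (W.a₆ + c.r * W.a₄ + c.r ^ 2 * W.a₂ + c.r ^ 3 - c.t * W.a₃ - c.t ^ 2
      - c.r * c.t * W.a₁) * hvwn 6 - w ^ 6 * ea6
  have hv12 : v ^ 12 = 1 := mul_right_cancel₀ hΔ (by rw [eΔ, one_mul])
  have hw12 : w ^ 12 = 1 := by
    have h2 : v ^ 12 * w ^ 12 = 1 := hvwn 12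
    rw [hv12, one_mul] at h2
    exact h2
  refine ⟨?_, ?_, ?_, ?_⟩
  · simp only [PU, IsRoot, eval_sub, eval_pow, eval_X, eval_C]
    rw [hw12]; ring
  · simp only [PR, IsRoot, eval_sub, eval_mul, eval_pow, eval_X, eval_C]
    linear_combination T8 - c.r * T6
  · simp only [PS, IsRoot, eval_add, eval_mul, eval_pow, eval_X, eval_C]
    linear_combination Ta2
  · simp only [PT, IsRoot, eval_add, eval_mul, eval_pow, eval_X, eval_C]
    linear_combination Ta6

lemma finite_autEC (hΔ : W.Δ ≠ 0) : Finite (AutEC W) := by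
  classical
  set Uset : Set F := {x | (PU : F[X]).IsRoot x} with hU
  have hUfin : Uset.Finite := finite_setOf_isRoot PU_ne
  set Rset : Set F := ⋃ u ∈ Uset, {x | (PR W u).IsRoot x} with hR
  have hRfin : Rset.Finite := hUfin.biUnion fun u _ => finite_setOf_isRoot (PR_ne W u)
  set Sset : Set F := ⋃ u ∈ Uset, ⋃ r ∈ Rset, {x | (PS W u r).IsRoot x} with hS
  have hSfin : Sset.Finite :=
    hUfin.biUnion fun u _ => hRfin.biUnion fun r _ => finite_setOf_isRoot (PS_ne W u r)
  set Tset : Set F := ⋃ u ∈ Uset, ⋃ r ∈ Rset, {x | (PT W u r).IsRoot x} with hT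
  have hTfin : Tset.Finite :=
    hUfin.biUnion fun u _ => hRfin.biUnion fun r _ => finite_setOf_isRoot (PT_ne W u r)
  set big : Set (F × F × F × F) := Uset ×ˢ Rset ×ˢ Sset ×ˢ Tset with hbig
  have hbigfin : big.Finite := hUfin.prod (hRfin.prod (hSfin.prod hTfin))
  haveI := hbigfin.to_subtype
  refine Finite.of_injective (fun c : AutEC W =>
    (⟨((c.val.u : F), c.val.r, c.val.s, c.val.t), ?_⟩ : ↥big)) ?_
  · obtain ⟨hu, hr, hs, ht⟩ := roots_of_aut W hΔ c.val c.prop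
    have hru : (c.val.u : F) ∈ Uset := hu
    have hrr : c.val.r ∈ Rset := Set.mem_biUnion hru hr
    refine ⟨hru, hrr, ?_, ?_⟩
    · exact Set.mem_biUnion hru (Set.mem_biUnion hrr hs)
    · exact Set.mem_biUnion hru (Set.mem_biUnion hrr ht)
  · intro c d h
    simp only [Subtype.mk.injEq, Prod.mk.injEq] at h
    exact Subtype.ext (VariableChange.ext (Units.ext h.1) h.2.1 h.2.2.1 h.2.2.2)



section Fix4

variable {K : Type*} [Field K] [Fintype K] {L : Type*} [Field L] [Algebra K L]
  {φ : L →+* L} (hφ : ∀ x, φ x = x ^ Fintype.card K)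

include hφ

lemma frob_fix' (x : K) : φ (algebraMap K L x) = algebraMap K L x := by
  rw [hφ, ← map_pow, FiniteField.pow_card]

lemma frob_comp : φ.comp (algebraMap K L) = algebraMap K L :=
  RingHom.ext (frob_fix' hφ)

-- assume frob_range from part 1:
variable (hrange : ∀ {x : L}, φ x = x → x ∈ Set.range (algebraMap K L))

omit hφ in
include hrange in
lemma fixed_vc {c : VariableChange L} (h : VariableChange.map c φ = c) :
    ∃ k : VariableChange K, VariableChange.map k (algebraMap K L) = c := by
  have hu : φ (c.u : L) = (c.u : L) := congrArg (fun d : VariableChange L => (d.u : L)) h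
  have hr : φ c.r = c.r := congrArg VariableChange.r h
  have hs : φ c.s = c.s := congrArg VariableChange.s h
  have ht : φ c.t = c.t := congrArg VariableChange.t h
  obtain ⟨xu, hxu⟩ := hrange hu
  obtain ⟨xr, hxr⟩ := hrange hr
  obtain ⟨xs, hxs⟩ := hrange hs
  obtain ⟨xt, hxt⟩ := hrange ht
  have hxu0 : xu ≠ 0 := by
    intro h0
    apply c.u.ne_zero
    rw [← hxu, h0, map_zero]
  exact ⟨⟨Units.mk0 xu hxu0, xr, xs, xt⟩,
    VariableChange.ext (Units.ext hxu) hxr hxs hxt⟩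

omit hφ in
include hrange in
lemma fixed_wc {V : WeierstrassCurve L} (h : V.map φ = V) :
    ∃ W : WeierstrassCurve K, W.map (algebraMap K L) = V := by
  obtain ⟨x1, h1⟩ := hrange (congrArg WeierstrassCurve.a₁ h)
  obtain ⟨x2, h2⟩ := hrange (congrArg WeierstrassCurve.a₂ h)
  obtain ⟨x3, h3⟩ := hrange (congrArg WeierstrassCurve.a₃ h)
  obtain ⟨x4, h4⟩ := hrange (congrArg WeierstrassCurve.a₄ h)
  obtain ⟨x6, h6⟩ := hrange (congrArg WeierstrassCurve.a₆ h)
  exact ⟨⟨x1, x2, x3, x4, x6⟩, WeierstrassCurve.ext h1 h2 h3 h4 h6⟩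


end Fix4

section Core2


variable {K : Type*} [Field K] [Fintype K]
  {φ : AlgebraicClosure K →+* AlgebraicClosure K}
  (hφ : ∀ x, φ x = x ^ Fintype.card K)
  (hrange : ∀ {x : AlgebraicClosure K}, φ x = x → x ∈ Set.range (algebraMap K (AlgebraicClosure K)))
  (hlang : ∀ a : VariableChange (AlgebraicClosure K),
    ∃ c : VariableChange (AlgebraicClosure K), VariableChange.map c φ = a * c)
  (hfinA : ∀ (V : WeierstrassCurve (AlgebraicClosure K)), V.Δ ≠ 0 → Finite (AutEC V))
  (hfix : ∀ x : K, φ (algebraMap K (AlgebraicClosure K) x) = algebraMap K (AlgebraicClosure K) x)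
  (hvcfix : ∀ {c : VariableChange (AlgebraicClosure K)}, VariableChange.map c φ = c →
    ∃ k : VariableChange K, VariableChange.map k (algebraMap K (AlgebraicClosure K)) = c)
  (hwcfix : ∀ {V : WeierstrassCurve (AlgebraicClosure K)}, V.map φ = V →
    ∃ W : WeierstrassCurve K, W.map (algebraMap K (AlgebraicClosure K)) = V)

include hφ hrange hlang hfinA hfix hvcfix hwcfix in
lemma card_formsOf (E : WeierstrassCurve K) [E.IsElliptic] :
    Nat.card (FormsOf E) = Nat.card (VariableChange K) := by
  classical
  set L := AlgebraicClosure K with hL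
  let ι : K →+* L := algebraMap K L
  have hcomp : φ.comp ι = ι := RingHom.ext hfix
  set Φ : VariableChange L →* VariableChange L := VariableChange.mapHom φ with hΦdef
  set Eb : WeierstrassCurve L := E.baseChange L with hEb
  have hfixE : Eb.map φ = Eb := by
    rw [hEb]
    show (E.map ι).map φ = E.map ι
    rw [WeierstrassCurve.map_map, hcomp]
  have hΔEb : Eb.Δ ≠ 0 := (E.map ι).isUnit_Δ.ne_zero
  have hmfix : ∀ k : VariableChange K, Φ (VariableChange.map k ι) = VariableChange.map k ι :=
    fun k => by
      show VariableChange.map (VariableChange.map k ι) φ = VariableChange.map k ι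
      rw [VariableChange.map_map, hcomp]
  have hWfix : ∀ W : WeierstrassCurve K, (W.map ι).map φ = W.map ι := fun W => by
    rw [WeierstrassCurve.map_map, hcomp]
  -- the twisting torsor
  let T := {c : VariableChange L // (Φ c * c⁻¹) • Eb = Eb}
  -- first projection: to the automorphism group
  let π1 : T → AutEC Eb := fun c => ⟨Φ c.val * c.val⁻¹, c.prop⟩
  have fib1 : ∀ b : AutEC Eb, Nonempty ({c : T // π1 c = b} ≃ VariableChange K) := by
    intro b
    obtain ⟨c₀, hc₀⟩ := hlang b.val
    replace hc₀ : Φ c₀ = b.val * c₀ := hc₀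
    have hc₀' : Φ c₀ * c₀⁻¹ = b.val := by rw [hc₀]; group
    have hkey : ∀ k : VariableChange K,
        Φ (c₀ * VariableChange.map k ι) * (c₀ * VariableChange.map k ι)⁻¹ = b.val := by
      intro k
      rw [map_mul, hmfix k, mul_inv_rev]
      rw [show Φ c₀ * VariableChange.map k ι * ((VariableChange.map k ι)⁻¹ * c₀⁻¹)
        = Φ c₀ * c₀⁻¹ by group]
      exact hc₀'
    refine ⟨Equiv.symm (Equiv.ofBijective (fun k : VariableChange K =>
      (⟨⟨c₀ * VariableChange.map k ι, by rw [hkey k]; exact b.prop⟩,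
        Subtype.ext (hkey k)⟩ : {c : T // π1 c = b})) ⟨?_, ?_⟩)⟩
    · intro k k' h
      have h1 : c₀ * VariableChange.map k ι = c₀ * VariableChange.map k' ι :=
        congrArg (fun x => x.val.val) h
      exact VariableChange.map_injective (algebraMap K L).injective (mul_left_cancel h1)
    · rintro ⟨⟨c, hcT⟩, hcπ⟩
      have hb : Φ c * c⁻¹ = b.val := congrArg Subtype.val hcπ
      have hc : Φ c = b.val * c := by rw [← hb]; group
      have hd : Φ (c₀⁻¹ * c) = c₀⁻¹ * c := by
        rw [map_mul, map_inv, hc₀, hc, mul_inv_rev]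
        group
      obtain ⟨k, hk⟩ := hvcfix hd
      refine ⟨k, ?_⟩
      apply Subtype.ext
      apply Subtype.ext
      show c₀ * VariableChange.map k ι = c
      rw [hk]
      group
  -- second projection: to the forms
  have hVfix : ∀ c : T, ((c.val⁻¹ : VariableChange L) • Eb).map φ = c.val⁻¹ • Eb := by
    intro c
    rw [map_smul' φ, hfixE]
    rw [show VariableChange.map c.val⁻¹ φ = (Φ c.val)⁻¹ from map_inv Φ c.val]
    have h3 : (Φ c.val)⁻¹ • ((Φ c.val * c.val⁻¹) • Eb) = c.val⁻¹ • Eb := by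
      rw [← mul_smul, inv_mul_cancel_left]
    rw [c.prop] at h3
    exact h3
  have hWex : ∀ c : T, ∃ W : WeierstrassCurve K, W.map ι = c.val⁻¹ • Eb :=
    fun c => hwcfix (hVfix c)
  choose Wf hWf using hWex
  have hΔW : ∀ c : T, ((c.val⁻¹ : VariableChange L) • Eb).Δ ≠ 0 := by
    intro c
    rw [smul_def, variableChange_Δ]
    exact mul_ne_zero (pow_ne_zero _ (Units.ne_zero _)) hΔEb
  have hWell : ∀ c : T, (Wf c).IsElliptic := by
    intro c
    have h1 : ι ((Wf c).Δ) ≠ 0 := by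
      rw [← WeierstrassCurve.map_Δ, hWf c]
      exact hΔW c
    refine ⟨isUnit_iff_ne_zero.mpr fun h0 => h1 ?_⟩
    rw [h0, map_zero]
  have hWform : ∀ c : T, ∃ d : VariableChange L, d • (Wf c).baseChange L = Eb := by
    intro c
    refine ⟨c.val, ?_⟩
    show c.val • (Wf c).map ι = Eb
    rw [hWf c, smul_inv_smul]
  let π2 : T → FormsOf E := fun c => ⟨Wf c, hWell c, hWform c⟩
  have fib2 : ∀ W : FormsOf E, Nonempty ({c : T // π2 c = W} ≃ AutEC Eb) := by
    intro W
    obtain ⟨c₁, hc₁⟩ := W.prop.2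
    replace hc₁ : c₁ • W.val.map ι = Eb := hc₁
    have hWbar : (c₁⁻¹ : VariableChange L) • Eb = W.val.map ι := by
      rw [← hc₁, inv_smul_smul]
    have hc₁φ : Φ c₁ • (W.val.map ι) = Eb := by
      have h2 := congrArg (fun V => WeierstrassCurve.map V φ) hc₁
      rw [map_smul' φ, hWfix W.val, hfixE] at h2
      exact h2
    have hc₁T : (Φ c₁ * c₁⁻¹) • Eb = Eb := by
      rw [mul_smul, hWbar, hc₁φ]
    have hTmem : ∀ a : AutEC Eb, (Φ (a.val * c₁) * (a.val * c₁)⁻¹) • Eb = Eb := by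
      intro a
      have hainv : (a.val⁻¹ : VariableChange L) • Eb = Eb := by
        have h4 : (a.val⁻¹ : VariableChange L) • (a.val • Eb) = Eb := by rw [inv_smul_smul]
        rw [a.prop] at h4
        exact h4
      have haΦ : Φ a.val • Eb = Eb := by
        have h2 := congrArg (fun V => WeierstrassCurve.map V φ) a.prop
        rw [map_smul' φ, hfixE] at h2
        exact h2
      rw [show Φ (a.val * c₁) * (a.val * c₁)⁻¹
        = Φ a.val * (Φ c₁ * (c₁⁻¹ * a.val⁻¹)) by rw [map_mul, mul_inv_rev]; group]
      rw [mul_smul, mul_smul, mul_smul, hainv, hWbar, hc₁φ, haΦ]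
    have hπ2mem : ∀ a : AutEC Eb, ∀ (h : (Φ (a.val * c₁) * (a.val * c₁)⁻¹) • Eb = Eb),
        π2 ⟨a.val * c₁, h⟩ = W := by
      intro a h
      apply Subtype.ext
      apply WeierstrassCurve.map_injective (algebraMap K L).injective
      show (Wf ⟨a.val * c₁, h⟩).map ι = W.val.map ι
      rw [hWf ⟨a.val * c₁, h⟩]
      have hainv : (a.val⁻¹ : VariableChange L) • Eb = Eb := by
        have h4 : (a.val⁻¹ : VariableChange L) • (a.val • Eb) = Eb := by rw [inv_smul_smul]
        rw [a.prop] at h4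
        exact h4
      rw [mul_inv_rev, mul_smul, hainv, hWbar]
    refine ⟨Equiv.symm (Equiv.ofBijective (fun a : AutEC Eb =>
      (⟨⟨a.val * c₁, hTmem a⟩, hπ2mem a (hTmem a)⟩ : {c : T // π2 c = W})) ⟨?_, ?_⟩)⟩
    · intro a a' h
      have h1 : a.val * c₁ = a'.val * c₁ := congrArg (fun x => x.val.val) h
      exact Subtype.ext (mul_right_cancel h1)
    · rintro ⟨⟨c, hcT⟩, hcπ⟩
      have hWc : Wf ⟨c, hcT⟩ = W.val := congrArg Subtype.val hcπ
      have hcEb : (c⁻¹ : VariableChange L) • Eb = W.val.map ι := by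
        rw [← hWf ⟨c, hcT⟩, hWc]
      have hcW : c • W.val.map ι = Eb := by
        rw [← hcEb, smul_inv_smul]
      refine ⟨⟨c * c₁⁻¹, ?_⟩, ?_⟩
      · rw [mul_smul, hWbar, hcW]
      · apply Subtype.ext
        apply Subtype.ext
        show c * c₁⁻¹ * c₁ = c
        group
  -- assemble the two cardinality computations
  haveI hAfin : Finite (AutEC Eb) := hfinA Eb hΔEb
  haveI hAne : Nonempty (AutEC Eb) := ⟨⟨1, one_smul _ _⟩⟩
  have hcard1 : Nat.card T = Nat.card (AutEC Eb) * Nat.card (VariableChange K) := by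
    let F := fun b : AutEC Eb => (fib1 b).some
    have e1 : T ≃ (AutEC Eb) × VariableChange K :=
      ((Equiv.sigmaFiberEquiv π1).symm.trans (Equiv.sigmaCongrRight F)).trans
        (Equiv.sigmaEquivProd _ _)
    rw [Nat.card_congr e1, Nat.card_prod]
  have hcard2 : Nat.card T = Nat.card (FormsOf E) * Nat.card (AutEC Eb) := by
    let F := fun W : FormsOf E => (fib2 W).some
    have e2 : T ≃ (FormsOf E) × AutEC Eb :=
      ((Equiv.sigmaFiberEquiv π2).symm.trans (Equiv.sigmaCongrRight F)).trans
        (Equiv.sigmaEquivProd _ _)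
    rw [Nat.card_congr e2, Nat.card_prod]
  have hA0 : 0 < Nat.card (AutEC Eb) := Nat.card_pos
  apply Nat.eq_of_mul_eq_mul_right hA0
  rw [← hcard2, hcard1, mul_comm]


end Core2

section Final

variable {K : Type*} [Field K] [Fintype K] (E : WeierstrassCurve K) [E.IsElliptic]

instance instFiniteForms : Finite (FormsOf E) :=
  Finite.of_injective (fun W : FormsOf E => W.val) Subtype.coe_injective

instance instFiniteAutEC {R : Type*} [CommRing R] [Finite R] (W : WeierstrassCurve R) :
    Finite (AutEC W) :=
  Finite.of_injective (fun c : AutEC W => c.val) Subtype.coe_injective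

instance instNonemptyAutEC {R : Type*} [CommRing R] (W : WeierstrassCurve R) :
    Nonempty (AutEC W) := ⟨⟨1, one_smul _ _⟩⟩

instance instMulActionForms : MulAction (VariableChange K) (FormsOf E) where
  smul c W := ⟨c • W.val, by
      haveI := W.prop.1
      rw [smul_def]
      exact inferInstance, by
      obtain ⟨d, hd⟩ := W.prop.2
      refine ⟨d * (VariableChange.map c (algebraMap K (AlgebraicClosure K)))⁻¹, ?_⟩
      show _ • (c • W.val).map (algebraMap K (AlgebraicClosure K)) = _
      rw [map_smul', mul_smul, inv_smul_smul]
      exact hd⟩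
  one_smul W := Subtype.ext (one_smul _ W.val)
  mul_smul c d W := Subtype.ext (mul_smul c d W.val)

lemma smul_forms_val (c : VariableChange K) (W : FormsOf E) :
    (c • W : FormsOf E).val = c • W.val := rfl

lemma formIso_equivalence : Equivalence (FormIsoRel E) where
  refl W := ⟨1, one_smul _ _⟩
  symm := by
    rintro W V ⟨c, h⟩
    exact ⟨c⁻¹, by rw [← h, inv_smul_smul]⟩
  trans := by
    rintro W V U ⟨c, h⟩ ⟨d, h'⟩
    exact ⟨d * c, by rw [mul_smul, h, h']⟩

lemma formIsoRel_iff (W V : FormsOf E) :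
    FormIsoRel E W V ↔ ∃ c : VariableChange K, c • W = V :=
  exists_congr fun c => ⟨fun h => Subtype.ext h, fun h => congrArg Subtype.val h⟩

end Final

end MassAux

/-- Proposition 2.2 of Howe's paper: for an elliptic curve `E` over a finite field
`F_q`, the sum of `1/#Aut_{F_q}(E')` over the `F̄_q/F_q`-forms `E'` of `E`, taken up
to `F_q`-isomorphism, equals `1`. -/
theorem sum_inv_aut_forms_eq_one {K : Type*} [Field K] [Fintype K]
    (E : WeierstrassCurve K) [E.IsElliptic] :
    ∑ᶠ x : Quot (FormIsoRel E), (1 : ℝ) / Nat.card (AutEC x.out.val) = 1 := by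
  classical
  set G := VariableChange K with hG
  -- the key cardinality identity
  have hcards : Nat.card (FormsOf E) = Nat.card G := by
    obtain ⟨φ, hφ⟩ := MassAux.exists_frobenius (K := K) (AlgebraicClosure K)
    exact MassAux.card_formsOf hφ (fun hx => MassAux.frob_range hφ hx)
      (MassAux.lang hφ) (fun V hV => MassAux.finite_autEC V hV)
      (MassAux.frob_fix hφ) (fun h => MassAux.fixed_vc (fun hx => MassAux.frob_range hφ hx) h)
      (fun h => MassAux.fixed_wc (fun hx => MassAux.frob_range hφ hx) h) E
  haveI : Finite (Quot (FormIsoRel E)) :=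
    Finite.of_surjective (Quot.mk _) Quot.mk_surjective
  haveI := Fintype.ofFinite (Quot (FormIsoRel E))
  haveI := Fintype.ofFinite (FormsOf E)
  rw [finsum_eq_sum_of_fintype]
  have hGpos : (0:ℝ) < Nat.card G := by exact_mod_cast Nat.card_pos
  -- orbit-stabilizer for each class
  have orbstab : ∀ x : Quot (FormIsoRel E),
      Nat.card (MulAction.orbit G x.out) * Nat.card (AutEC x.out.val) = Nat.card G := by
    intro x
    set b := x.out with hb
    have e : AutEC b.val ≃ MulAction.stabilizer G b :=
      { toFun := fun c => ⟨c.val, Subtype.ext c.prop⟩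
        invFun := fun c => ⟨c.val, congrArg Subtype.val c.prop⟩
        left_inv := fun c => rfl
        right_inv := fun c => rfl }
    rw [Nat.card_congr e,
      Nat.card_congr (MulAction.orbitEquivQuotientStabilizer G b)]
    exact (Subgroup.card_eq_card_quotient_mul_card_subgroup _).symm
  -- decomposition of the forms into orbits
  have hpart : Nat.card (FormsOf E) =
      ∑ x : Quot (FormIsoRel E), Nat.card (MulAction.orbit G x.out) := by
    have iffx : ∀ (x : Quot (FormIsoRel E)) (W : FormsOf E),
        Quot.mk (FormIsoRel E) W = x ↔ W ∈ MulAction.orbit G x.out := by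
      intro x W
      constructor
      · intro h
        have h1 : Quot.mk (FormIsoRel E) W = Quot.mk (FormIsoRel E) x.out :=
          h.trans (x.out_eq).symm
        have h2 : FormIsoRel E W x.out :=
          ((MassAux.formIso_equivalence E).eqvGen_iff).mp (Quot.eq.mp h1)
        obtain ⟨c, hc⟩ := (MassAux.formIsoRel_iff E _ _).mp h2
        exact MulAction.mem_orbit_iff.mpr ⟨c⁻¹, by rw [← hc, inv_smul_smul]⟩
      · intro h
        obtain ⟨c, hc⟩ := MulAction.mem_orbit_iff.mp h
        have h2 : FormIsoRel E x.out W := (MassAux.formIsoRel_iff E _ _).mpr ⟨c, hc⟩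
        exact (Quot.sound h2).symm.trans x.out_eq
    have e : FormsOf E ≃ Σ x : Quot (FormIsoRel E), MulAction.orbit G x.out :=
      (Equiv.sigmaFiberEquiv (Quot.mk (FormIsoRel E))).symm.trans
        (Equiv.sigmaCongrRight fun x => Equiv.subtypeEquivRight (iffx x))
    rw [Nat.card_congr e]
    rw [Nat.card_eq_fintype_card, Fintype.card_sigma]
    exact Finset.sum_congr rfl fun x _ => (Nat.card_eq_fintype_card).symm
  -- put it together over ℝ
  have key : ∀ x : Quot (FormIsoRel E),
      (1 : ℝ) / Nat.card (AutEC x.out.val)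
        = (Nat.card (MulAction.orbit G x.out) : ℝ) / Nat.card G := by
    intro x
    have h := orbstab x
    have hs : (Nat.card (AutEC x.out.val) : ℝ) ≠ 0 := by
      exact_mod_cast (Nat.card_pos (α := AutEC x.out.val)).ne'
    rw [div_eq_div_iff hs hGpos.ne', one_mul]
    exact_mod_cast h.symm
  calc ∑ x : Quot (FormIsoRel E), (1 : ℝ) / Nat.card (AutEC x.out.val)
      = ∑ x : Quot (FormIsoRel E),
          (Nat.card (MulAction.orbit G x.out) : ℝ) / Nat.card G :=
        Finset.sum_congr rfl fun x _ => key x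
    _ = (∑ x : Quot (FormIsoRel E), (Nat.card (MulAction.orbit G x.out) : ℝ)) / Nat.card G :=
        (Finset.sum_div _ _ _).symm
    _ = ((Nat.card (FormsOf E) : ℝ)) / Nat.card G := by
        rw [hpart]
        push_cast
        rfl
    _ = 1 := by rw [hcards]; exact div_self hGpos.ne'
end

section
/- Let E be an elliptic curve over a finite field F_q, and suppose d, m, n are positive integers with m | d | gcd(n, q-1), and E[n](F_q) ≅ (ℤ/dℤ) × (ℤ/nℤ). Fix a primitive m-th root of unity ζ_m ∈ F_q. Then the number of pairs (P,Q) of points of E(F_q) with ord(P) = m, ord(Q) = n, and Weil pairing e_m(P, (n/m)Q) = ζ_m equals m·φ(n)·ψ(n)/ψ(n/d). -/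
open WeierstrassCurve WeierstrassCurve.Affine

/-- `ψ(n) = n ∏_{p ∣ n} (1 + 1/p)` as a rational number. -/
def psiQ (n : ℕ) : ℚ := n * ∏ p ∈ n.primeFactors, (1 + 1 / (p : ℚ))

/-- The subgroup of `n`-torsion elements of an additive commutative group. -/
def torsionSubgroup (G : Type*) [AddCommGroup G] (n : ℕ) : AddSubgroup G where
  carrier := {P | n • P = 0}
  add_mem' := by
    intro a b ha hb
    simp only [Set.mem_setOf_eq, smul_add] at *
    rw [ha, hb, add_zero]
  zero_mem' := by simp
  neg_mem' := by
    intro a ha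
    simp only [Set.mem_setOf_eq, smul_neg] at *
    rw [ha, neg_zero]

lemma psiQ_one : psiQ 1 = 1 := by simp [psiQ]

lemma psiQ_pos {n : ℕ} (hn : 0 < n) : 0 < psiQ n := by
  unfold psiQ
  apply mul_pos (by exact_mod_cast hn)
  apply Finset.prod_pos
  intro p hp
  have hp2 : 2 ≤ p := (Nat.prime_of_mem_primeFactors hp).two_le
  positivity

lemma psiQ_prime_pow {p k : ℕ} (hp : p.Prime) (hk : 0 < k) :
    psiQ (p ^ k) = (p : ℚ) ^ k * (1 + 1 / (p : ℚ)) := by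
  unfold psiQ
  rw [Nat.primeFactors_prime_pow hk.ne' hp]
  push_cast
  rw [Finset.prod_singleton]

lemma psiQ_mul_coprime {a b : ℕ} (ha : a ≠ 0) (hb : b ≠ 0) (h : Nat.Coprime a b) :
    psiQ (a * b) = psiQ a * psiQ b := by
  unfold psiQ
  rw [Nat.primeFactors_mul ha hb,
    Finset.prod_union (Nat.Coprime.disjoint_primeFactors h)]
  push_cast
  ring

lemma zmod_tor_ord (a c : ℕ) (x : ZMod a) : c • x = 0 ↔ addOrderOf x ∣ c :=
  (addOrderOf_dvd_iff_nsmul_eq_zero).symm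

lemma zmod_torsion_card (a c : ℕ) (ha : 0 < a) :
    Nat.card {x : ZMod a // c • x = 0} = Nat.gcd a c := by
  have : NeZero a := ⟨ha.ne'⟩
  set g := Nat.gcd a c with hg
  have hga : g ∣ a := Nat.gcd_dvd_left a c
  have hgpos : 0 < g := Nat.gcd_pos_of_pos_left _ ha
  have hordv : addOrderOf (((a/g : ℕ) : ZMod a)) = g := by
    rw [ZMod.addOrderOf_coe _ ha.ne', Nat.gcd_eq_right (Nat.div_dvd_of_dvd hga),
      Nat.div_div_self hga ha.ne']
  have hax : ∀ x : ZMod a, addOrderOf x ∣ a := by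
    intro x
    rw [addOrderOf_dvd_iff_nsmul_eq_zero, nsmul_eq_mul, ZMod.natCast_self, zero_mul]
  have hset : ∀ x : ZMod a, c • x = 0 ↔ x ∈ AddSubgroup.zmultiples ((a/g : ℕ) : ZMod a) := by
    intro x
    constructor
    · intro h
      rw [zmod_tor_ord] at h
      have h2 : (g : ℕ) • x = 0 := by
        rw [zmod_tor_ord]; exact Nat.dvd_gcd (hax x) h
      have h3 : (a : ℕ) ∣ g * x.val := by
        have : ((g * x.val : ℕ) : ZMod a) = 0 := by
          push_cast
          rw [← nsmul_eq_mul, ZMod.natCast_val, ZMod.cast_id]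
          exact h2
        exact (ZMod.natCast_eq_zero_iff _ _).mp this
      obtain ⟨t, ht⟩ := h3
      have ha' : g * (a / g) = a := Nat.mul_div_cancel' hga
      have hxval : x.val = (a / g) * t := by
        have : g * x.val = g * ((a / g) * t) := by rw [ht, ← mul_assoc, ha']
        exact Nat.eq_of_mul_eq_mul_left hgpos this
      refine ⟨t, ?_⟩
      have hx : x = ((x.val : ℕ) : ZMod a) := by rw [ZMod.natCast_val, ZMod.cast_id]
      rw [hx, hxval]
      simp only [zsmul_eq_mul]
      push_cast
      ring
    · rintro ⟨k, rfl⟩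
      have hcv : (c : ℕ) • ((a/g : ℕ) : ZMod a) = 0 := by
        rw [zmod_tor_ord, hordv]; exact Nat.gcd_dvd_right a c
      rw [smul_comm, hcv, smul_zero]
  calc Nat.card {x : ZMod a // c • x = 0}
      = Nat.card (AddSubgroup.zmultiples ((a/g : ℕ) : ZMod a)) :=
        Nat.card_congr (Equiv.subtypeEquivRight hset)
    _ = g := by rw [Nat.card_zmultiples, hordv]

lemma prod_smul_zero_iff {A B : Type*} [AddMonoid A] [AddMonoid B] (c : ℕ) (x : A × B) :
    c • x = 0 ↔ c • x.1 = 0 ∧ c • x.2 = 0 := by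
  rw [Prod.smul_def, Prod.ext_iff]; rfl

lemma prod_torsion_card (a b c : ℕ) (ha : 0 < a) (hb : 0 < b) :
    Nat.card {x : ZMod a × ZMod b // c • x = 0} = Nat.gcd a c * Nat.gcd b c := by
  have e : {x : ZMod a × ZMod b // c • x = 0} ≃
      {u : ZMod a // c • u = 0} × {v : ZMod b // c • v = 0} :=
    (Equiv.subtypeEquivRight (fun x => prod_smul_zero_iff c x)).trans
      (Equiv.subtypeProdEquivProd (p := fun u : ZMod a => c • u = 0)
        (q := fun v : ZMod b => c • v = 0))
  rw [Nat.card_congr e, Nat.card_prod, zmod_torsion_card a c ha, zmod_torsion_card b c hb]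

lemma zmod_addOrderOf_dvd (a : ℕ) (x : ZMod a) : addOrderOf x ∣ a := by
  rw [addOrderOf_dvd_iff_nsmul_eq_zero, nsmul_eq_mul, ZMod.natCast_self, zero_mul]

lemma prod_zmod_addOrderOf_dvd {a b n : ℕ} (ha : a ∣ n) (hb : b ∣ n)
    (x : ZMod a × ZMod b) : addOrderOf x ∣ n := by
  rw [addOrderOf_dvd_iff_nsmul_eq_zero, prod_smul_zero_iff]
  constructor
  · rw [zmod_tor_ord]; exact (zmod_addOrderOf_dvd a x.1).trans ha
  · rw [zmod_tor_ord]; exact (zmod_addOrderOf_dvd b x.2).trans hb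

lemma gcd_prime_pow {p : ℕ} (hp : p.Prime) (u v : ℕ) :
    Nat.gcd (p ^ u) (p ^ v) = p ^ min u v := by
  rcases le_total u v with h | h
  · rw [Nat.gcd_eq_left (pow_dvd_pow p h), min_eq_left h]
  · rw [Nat.gcd_eq_right (pow_dvd_pow p h), min_eq_right h]

lemma count_pp (p j k : ℕ) (hp : p.Prime) (hjk : j ≤ k) (hk : 0 < k) :
    Nat.card {x : ZMod (p^j) × ZMod (p^k) // addOrderOf x = p^k}
      = p^j * p^k - p^(min j (k-1)) * p^(k-1) := by
  classical
  haveI : NeZero (p^j) := ⟨(pow_pos hp.pos j).ne'⟩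
  haveI : NeZero (p^k) := ⟨(pow_pos hp.pos k).ne'⟩
  have hiff : ∀ x : ZMod (p^j) × ZMod (p^k),
      addOrderOf x = p^k ↔ ¬ ((p^(k-1)) • x = 0) := by
    intro x
    have hord : addOrderOf x ∣ p^k :=
      prod_zmod_addOrderOf_dvd (pow_dvd_pow p hjk) dvd_rfl x
    constructor
    · intro h h0
      have : addOrderOf x ∣ p^(k-1) := addOrderOf_dvd_of_nsmul_eq_zero h0
      rw [h] at this
      have := (Nat.pow_dvd_pow_iff_le_right hp.one_lt).mp this
      omega
    · intro h0
      obtain ⟨i, hi, hordeq⟩ := (Nat.dvd_prime_pow hp).mp hord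
      rcases eq_or_lt_of_le hi with rfl | hlt
      · exact hordeq
      · exfalso
        apply h0
        rw [← addOrderOf_dvd_iff_nsmul_eq_zero, hordeq]
        exact pow_dvd_pow p (by omega)
  have hcompl := Fintype.card_subtype_compl (fun x : ZMod (p^j) × ZMod (p^k) => (p^(k-1)) • x = 0)
  calc Nat.card {x : ZMod (p^j) × ZMod (p^k) // addOrderOf x = p^k}
      = Nat.card {x : ZMod (p^j) × ZMod (p^k) // ¬ ((p^(k-1)) • x = 0)} :=
        Nat.card_congr (Equiv.subtypeEquivRight hiff)
    _ = Fintype.card {x : ZMod (p^j) × ZMod (p^k) // ¬ ((p^(k-1)) • x = 0)} :=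
        Nat.card_eq_fintype_card
    _ = Fintype.card (ZMod (p^j) × ZMod (p^k))
        - Fintype.card {x : ZMod (p^j) × ZMod (p^k) // (p^(k-1)) • x = 0} := hcompl
    _ = p^j * p^k - p^(min j (k-1)) * p^(k-1) := by
        rw [Fintype.card_prod, ZMod.card, ZMod.card]
        congr 1
        rw [← Nat.card_eq_fintype_card,
          prod_torsion_card _ _ _ (pow_pos hp.pos j) (pow_pos hp.pos k),
          gcd_prime_pow hp, gcd_prime_pow hp, min_eq_right (by omega : k - 1 ≤ k)]

lemma ord_prod_eq_iff {d1 a d2 b : ℕ} (ha : 0 < a) (hb : 0 < b) (hab : Nat.Coprime a b)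
    (hd1 : d1 ∣ a) (hd2 : d2 ∣ b) (u : ZMod d1 × ZMod a) (v : ZMod d2 × ZMod b) :
    addOrderOf (⟨u, v⟩ : (ZMod d1 × ZMod a) × (ZMod d2 × ZMod b)) = a * b ↔
      addOrderOf u = a ∧ addOrderOf v = b := by
  have hu : addOrderOf u ∣ a := prod_zmod_addOrderOf_dvd hd1 dvd_rfl u
  have hv : addOrderOf v ∣ b := prod_zmod_addOrderOf_dvd hd2 dvd_rfl v
  have hcop : (addOrderOf u).Coprime (addOrderOf v) :=
    Nat.Coprime.coprime_dvd_left hu (Nat.Coprime.coprime_dvd_right hv hab)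
  rw [Prod.addOrderOf, Nat.Coprime.lcm_eq_mul hcop]
  constructor
  · intro h
    have h1 : a ∣ addOrderOf u := by
      have : a * b ∣ addOrderOf u * b := h ▸ mul_dvd_mul_left (addOrderOf u) hv
      exact (mul_dvd_mul_iff_right hb.ne').mp this
    have ho1 : addOrderOf u = a := Nat.dvd_antisymm hu h1
    refine ⟨ho1, ?_⟩
    rw [ho1] at h
    exact Nat.eq_of_mul_eq_mul_left ha h
  · rintro ⟨h1, h2⟩
    rw [h1, h2]

lemma countA (n : ℕ) : ∀ d : ℕ, 0 < n → d ∣ n →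
    (Nat.card {x : ZMod d × ZMod n // addOrderOf x = n} : ℚ) * psiQ (n / d)
      = (Nat.totient n : ℚ) * psiQ n := by
  induction n using Nat.recOnPosPrimePosCoprime with
  | zero => intro d h _; exact absurd h (lt_irrefl 0)
  | one =>
    intro d _ hd
    rw [Nat.dvd_one] at hd
    subst hd
    have : ∀ x : ZMod 1 × ZMod 1, addOrderOf x = 1 := by
      intro x
      rw [Subsingleton.elim x 0, addOrderOf_zero]
    rw [Nat.card_congr ((Equiv.subtypeEquivRight (fun x => iff_of_true (this x) trivial)).trans
      (Equiv.subtypeUnivEquiv (fun _ => trivial)))]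
    simp [psiQ_one, Nat.totient_one]
  | prime_pow p k hpp hk =>
    intro d hpos hdvd
    obtain ⟨j, hj, rfl⟩ := (Nat.dvd_prime_pow hpp).mp hdvd
    have hp0 : (0:ℚ) < (p:ℚ) := by exact_mod_cast hpp.pos
    have hcard := count_pp p j k hpp hj hk
    have hle : p^(min j (k-1)) * p^(k-1) ≤ p^j * p^k :=
      Nat.mul_le_mul (Nat.pow_le_pow_right hpp.pos (min_le_left _ _))
        (Nat.pow_le_pow_right hpp.pos (by omega))
    have hcast : (Nat.card {x : ZMod (p^j) × ZMod (p^k) // addOrderOf x = p^k} : ℚ)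
        = (p:ℚ)^j * (p:ℚ)^k - (p:ℚ)^(min j (k-1)) * (p:ℚ)^(k-1) := by
      rw [hcard, Nat.cast_sub hle]
      push_cast
      ring
    have hdiv : p^k / p^j = p^(k-j) := Nat.pow_div hj hpp.pos
    have htot : (Nat.totient (p^k) : ℚ) = (p:ℚ)^(k-1) * ((p:ℚ) - 1) := by
      rw [Nat.totient_prime_pow hpp hk]
      push_cast [Nat.cast_sub hpp.one_le]
      ring
    have hpk1 : (p:ℚ)^(k-1) * (p:ℚ) = (p:ℚ)^k := by
      rw [← pow_succ, Nat.sub_add_cancel hk]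
    rw [hcast, hdiv, htot, psiQ_prime_pow hpp hk]
    rcases eq_or_lt_of_le hj with rfl | hlt
    · -- j = k
      rw [min_eq_right (by omega : j - 1 ≤ j), Nat.sub_self, pow_zero, psiQ_one]
      have h2 : (p:ℚ)^j * (1 + 1/(p:ℚ)) = (p:ℚ)^j + (p:ℚ)^(j-1) := by
        rw [mul_add, mul_one, mul_one_div, ← hpk1, mul_div_assoc, div_self hp0.ne', mul_one]
      rw [h2]
      linear_combination (-((p:ℚ)^j + (p:ℚ)^(j-1))) * hpk1
    · -- j < k
      rw [min_eq_left (by omega : j ≤ k - 1), psiQ_prime_pow hpp (by omega : 0 < k - j)]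
      have hjk' : (p:ℚ)^j * (p:ℚ)^(k-j) = (p:ℚ)^k := pow_mul_pow_sub (p:ℚ) hj
      linear_combination ((1+1/(p:ℚ)) * ((p:ℚ)^k - (p:ℚ)^(k-1))) * hjk'
        - ((1+1/(p:ℚ)) * (p:ℚ)^k) * hpk1
  | coprime a b ha hb hab iha ihb =>
    intro d hpos hdvd
    have ha0 : 0 < a := by omega
    have hb0 : 0 < b := by omega
    set d1 := Nat.gcd d a with hd1def
    set d2 := Nat.gcd d b with hd2def
    have hd12 : d1 * d2 = d := (Nat.gcd_mul_gcd_eq_iff_dvd_mul_of_coprime hab).mpr hdvd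
    have hd1a : d1 ∣ a := Nat.gcd_dvd_right d a
    have hd2b : d2 ∣ b := Nat.gcd_dvd_right d b
    have cop12 : Nat.Coprime d1 d2 :=
      Nat.Coprime.coprime_dvd_left hd1a (Nat.Coprime.coprime_dvd_right hd2b hab)
    -- the big additive equivalence
    have e0 : ZMod d ≃+ ZMod d1 × ZMod d2 :=
      (ZMod.ringEquivCongr hd12.symm).toAddEquiv.trans (ZMod.chineseRemainder cop12).toAddEquiv
    have eab : ZMod (a*b) ≃+ ZMod a × ZMod b := (ZMod.chineseRemainder hab).toAddEquiv
    have Φ : ZMod d × ZMod (a*b) ≃+ (ZMod d1 × ZMod a) × (ZMod d2 × ZMod b) :=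
      (AddEquiv.prodCongr e0 eab).trans (AddEquiv.prodProdProdComm _ _ _ _)
    have hE : Nat.card {x : ZMod d × ZMod (a*b) // addOrderOf x = a*b}
        = Nat.card {u : ZMod d1 × ZMod a // addOrderOf u = a}
          * Nat.card {v : ZMod d2 × ZMod b // addOrderOf v = b} := by
      rw [← Nat.card_prod]
      apply Nat.card_congr
      have E1 : {x : ZMod d × ZMod (a*b) // addOrderOf x = a*b} ≃
          {y : (ZMod d1 × ZMod a) × (ZMod d2 × ZMod b) // addOrderOf y = a*b} :=
        Φ.toEquiv.subtypeEquiv (fun x => by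
          rw [show Φ.toEquiv x = Φ x from rfl, AddEquiv.addOrderOf_eq])
      have E2 : {y : (ZMod d1 × ZMod a) × (ZMod d2 × ZMod b) // addOrderOf y = a*b} ≃
          {y : (ZMod d1 × ZMod a) × (ZMod d2 × ZMod b) //
            addOrderOf y.1 = a ∧ addOrderOf y.2 = b} :=
        Equiv.subtypeEquivRight (fun y => by
          have := ord_prod_eq_iff ha0 hb0 hab hd1a hd2b y.1 y.2
          simpa using this)
      exact (E1.trans E2).trans (Equiv.subtypeProdEquivProd
        (p := fun u : ZMod d1 × ZMod a => addOrderOf u = a)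
        (q := fun v : ZMod d2 × ZMod b => addOrderOf v = b))
    have hdivab : (a*b) / d = (a/d1) * (b/d2) := by
      rw [← hd12, Nat.div_mul_div_comm hd1a hd2b]
    have had1 : 0 < a / d1 := Nat.div_pos (Nat.le_of_dvd ha0 hd1a) (Nat.gcd_pos_of_pos_right d ha0)
    have hbd2 : 0 < b / d2 := Nat.div_pos (Nat.le_of_dvd hb0 hd2b) (Nat.gcd_pos_of_pos_right d hb0)
    have hcopdiv : Nat.Coprime (a/d1) (b/d2) :=
      Nat.Coprime.coprime_dvd_left (Nat.div_dvd_of_dvd hd1a)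
        (Nat.Coprime.coprime_dvd_right (Nat.div_dvd_of_dvd hd2b) hab)
    have iha' := iha d1 ha0 hd1a
    have ihb' := ihb d2 hb0 hd2b
    rw [hE, hdivab, psiQ_mul_coprime had1.ne' hbd2.ne' hcopdiv, Nat.totient_mul hab,
      psiQ_mul_coprime ha0.ne' hb0.ne' hab]
    push_cast
    linear_combination ((Nat.card {v : ZMod d2 × ZMod b // addOrderOf v = b} : ℚ)
        * psiQ (b / d2)) * iha' + ((Nat.totient a : ℚ) * psiQ a) * ihb'

lemma transfer_card_tor {G : Type*} [AddCommGroup G] {n d : ℕ}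
    (φ : (torsionSubgroup G n) ≃+ ZMod d × ZMod n) {c : ℕ} (hc : c ∣ n) :
    Nat.card {P : G // c • P = 0} = Nat.card {x : ZMod d × ZMod n // c • x = 0} := by
  obtain ⟨s, hs⟩ := hc
  have hmem : ∀ P : G, c • P = 0 → P ∈ torsionSubgroup G n := by
    intro P h
    show n • P = 0
    rw [hs, mul_comm, mul_smul, h, smul_zero]
  apply Nat.card_congr
  refine ⟨fun P => ⟨φ ⟨P.1, hmem P.1 P.2⟩, ?_⟩, fun x => ⟨(φ.symm x.1).1, ?_⟩, ?_, ?_⟩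
  · have h0 : c • (⟨P.1, hmem P.1 P.2⟩ : torsionSubgroup G n) = 0 :=
      Subtype.ext (by simpa using P.2)
    rw [← map_nsmul, h0, map_zero]
  · have h2 : c • (φ.symm x.1) = 0 := by rw [← map_nsmul, x.2, map_zero]
    simpa using congrArg Subtype.val h2
  · intro P; apply Subtype.ext; simp
  · intro x; apply Subtype.ext; simp

lemma transfer_card_ord {G : Type*} [AddCommGroup G] {n d : ℕ}
    (φ : (torsionSubgroup G n) ≃+ ZMod d × ZMod n) :
    Nat.card {P : G // addOrderOf P = n}
      = Nat.card {x : ZMod d × ZMod n // addOrderOf x = n} := by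
  have hmem : ∀ P : G, addOrderOf P = n → P ∈ torsionSubgroup G n := by
    intro P h
    show n • P = 0
    rw [← h]
    exact addOrderOf_nsmul_eq_zero P
  apply Nat.card_congr
  refine ⟨fun P => ⟨φ ⟨P.1, hmem P.1 P.2⟩, ?_⟩, fun x => ⟨(φ.symm x.1).1, ?_⟩, ?_, ?_⟩
  · rw [AddEquiv.addOrderOf_eq, AddSubgroup.addOrderOf_mk]
    exact P.2
  · rw [AddSubgroup.addOrderOf_coe, AddEquiv.addOrderOf_eq]
    exact x.2
  · intro P; apply Subtype.ext; simp
  · intro x; apply Subtype.ext; simp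

section Fiber

variable {K : Type*} [Field K] [Fintype K] {G : Type*} [AddCommGroup G] [Finite G]

lemma fiber_count {m : ℕ} (hm : 0 < m) (e : G → G → K)
    (hbil_left : ∀ P P' Q : G, m • P = 0 → m • P' = 0 → m • Q = 0 →
      e (P + P') Q = e P Q * e P' Q)
    (hbil_right : ∀ P Q Q' : G, m • P = 0 → m • Q = 0 → m • Q' = 0 →
      e P (Q + Q') = e P Q * e P Q')
    (halt : ∀ P : G, m • P = 0 → e P P = 1)
    (hnondeg : ∀ P : G, m • P = 0 → (∀ Q : G, m • Q = 0 → e P Q = 1) → P = 0)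
    (hSm : Nat.card {P : G // m • P = 0} = m * m)
    (ζ : K) (hζ : orderOf ζ = m)
    (R : G) (hR : addOrderOf R = m) :
    Nat.card {P : G // addOrderOf P = m ∧ e P R = ζ} = m := by
  classical
  have hmR : m • R = 0 := by rw [← hR]; exact addOrderOf_nsmul_eq_zero R
  have htor_smul : ∀ (k : ℕ) (P : G), m • P = 0 → m • (k • P) = 0 := by
    intro k P h
    rw [smul_comm, h, smul_zero]
  -- e 0 Q = 1 and e P 0 = 1
  have he0 : ∀ Q : G, m • Q = 0 → e 0 Q = 1 := by
    intro Q hQ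
    have h1 : e (0 + Q) Q = e 0 Q * e Q Q := hbil_left 0 Q Q (smul_zero m) hQ hQ
    rw [zero_add, halt Q hQ, mul_one] at h1
    exact h1.symm
  have heP0 : ∀ P : G, m • P = 0 → e P 0 = 1 := by
    intro P hP
    have h1 : e P (0 + P) = e P 0 * e P P := hbil_right P 0 P hP (smul_zero m) hP
    rw [zero_add, halt P hP, mul_one] at h1
    exact h1.symm
  -- power rules
  have hpow_left : ∀ (k : ℕ) (P Q : G), m • P = 0 → m • Q = 0 →
      e (k • P) Q = e P Q ^ k := by
    intro k P Q hP hQ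
    induction k with
    | zero => simpa using he0 Q hQ
    | succ k ih =>
      rw [succ_nsmul, hbil_left _ _ _ (htor_smul k P hP) hP hQ, ih, pow_succ]
  have hpow_right : ∀ (k : ℕ) (P Q : G), m • P = 0 → m • Q = 0 →
      e P (k • Q) = e P Q ^ k := by
    intro k P Q hP hQ
    induction k with
    | zero => simpa using heP0 P hP
    | succ k ih =>
      rw [succ_nsmul, hbil_right _ _ _ hP (htor_smul k Q hQ) hQ, ih, pow_succ]
  have hskew : ∀ P Q : G, m • P = 0 → m • Q = 0 → e P Q * e Q P = 1 := by
    intro P Q hP hQ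
    have hPQ : m • (P + Q) = 0 := by rw [smul_add, hP, hQ, add_zero]
    have h1 := halt (P + Q) hPQ
    rw [hbil_left P Q (P+Q) hP hQ hPQ, hbil_right P P Q hP hP hQ,
      hbil_right Q P Q hQ hP hQ, halt P hP, halt Q hQ, one_mul, mul_one] at h1
    exact h1
  have hpow1 : ∀ P : G, m • P = 0 → e P R ^ m = 1 := by
    intro P hP
    rw [← hpow_left m P R hP hmR, hP, he0 R hmR]
  -- the torsion subgroup and the character
  set S := torsionSubgroup G m with hSdef
  have hmemS : ∀ P : G, P ∈ S ↔ m • P = 0 := fun P => Iff.rfl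
  -- unit-valued character
  have hval : ∀ x : K, x ^ m = 1 → x * x ^ (m-1) = 1 := by
    intro x hx
    rw [← pow_succ' x (m-1), Nat.sub_add_cancel hm]
    exact hx
  have hval' : ∀ x : K, x ^ m = 1 → x ^ (m-1) * x = 1 := by
    intro x hx
    rw [← pow_succ x (m-1), Nat.sub_add_cancel hm]
    exact hx
  let χu : S → Kˣ := fun P =>
    ⟨e P.1 R, e P.1 R ^ (m-1), hval _ (hpow1 P.1 P.2), hval' _ (hpow1 P.1 P.2)⟩
  let χ : Multiplicative S →* Kˣ :=
    MonoidHom.mk' (fun g => χu g.toAdd)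
      (fun g h => Units.ext (hbil_left _ _ R g.toAdd.2 h.toAdd.2 hmR))
  have hχval : ∀ g : Multiplicative S, (χ g : K) = e (g.toAdd).1 R := fun g => rfl
  -- every element of the range is an m-th root of unity
  have hrange1 : ∀ x : Kˣ, x ∈ χ.range → x ^ m = 1 := by
    rintro x ⟨g, rfl⟩
    have h1 : m • g.toAdd = (0 : S) := Subtype.ext (by simpa using (hmemS _).mp g.toAdd.2)
    have hg : g ^ m = 1 := by
      rw [← ofAdd_toAdd g, ← ofAdd_nsmul, h1]
      rfl
    rw [← map_pow, hg, map_one]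
  set t := Nat.card χ.range with htdef
  have hranget : ∀ x : Kˣ, x ∈ χ.range → x ^ t = 1 := by
    intro x hx
    have h1 : (⟨x, hx⟩ : χ.range) ^ t = 1 := pow_card_eq_one'
    have := congrArg (Subtype.val) h1
    simpa using this
  -- m ∣ t
  have hmt : m ∣ t := by
    have h3 : ∀ P : G, m • P = 0 → e P R ^ t = 1 := by
      intro P hP
      have := hranget (χ (Multiplicative.ofAdd ⟨P, hP⟩)) ⟨_, rfl⟩
      have h4 := congrArg (Units.val) this
      simpa [hχval] using h4
    have h5 : ∀ P : G, m • P = 0 → e (t • R) P = 1 := by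
      intro P hP
      have h6 : e P (t • R) = 1 := by
        rw [hpow_right t P R hP hmR]
        exact h3 P hP
      have h7 := hskew (t • R) P (htor_smul t R hmR) hP
      rw [h6, mul_one] at h7
      exact h7
    have h8 : t • R = 0 := hnondeg (t • R) (htor_smul t R hmR) h5
    have h9 : addOrderOf R ∣ t := addOrderOf_dvd_of_nsmul_eq_zero h8
    rwa [hR] at h9
  -- t ∣ m
  have htm : t ∣ m := by
    obtain ⟨g, hg⟩ := IsCyclic.exists_generator (α := χ.range)
    have h1 : orderOf g = t := orderOf_eq_card_of_forall_mem_zpowers hg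
    have h2 : g ^ m = 1 := by
      apply Subtype.ext
      simpa using hrange1 g.1 g.2
    rw [← h1]
    exact orderOf_dvd_of_pow_eq_one h2
  have htm' : t = m := Nat.dvd_antisymm htm hmt
  -- ζ as a unit
  have hζm : ζ ^ m = 1 := by rw [← hζ]; exact pow_orderOf_eq_one ζ
  let ζu : Kˣ := ⟨ζ, ζ ^ (m-1), hval _ hζm, hval' _ hζm⟩
  -- ζu is in the range
  have hζu_mem : ζu ∈ χ.range := by
    letI : Fintype (χ.range : Set Kˣ) := Fintype.ofFinite _
    let F : Finset Kˣ := Finset.univ.filter (fun x : Kˣ => x ^ m = 1)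
    have hFle : F.card ≤ m := IsCyclic.card_pow_eq_one_le hm
    have hsub : (χ.range : Set Kˣ).toFinset ⊆ F := by
      intro x hx
      rw [Set.mem_toFinset] at hx
      simp only [F, Finset.mem_filter, Finset.mem_univ, true_and]
      exact hrange1 x hx
    have hcardeq : (χ.range : Set Kˣ).toFinset.card = m := by
      rw [Set.toFinset_card]
      rw [← htm']
      rw [htdef]
      exact (Nat.card_eq_fintype_card).symm
    have hFeq : (χ.range : Set Kˣ).toFinset = F :=
      Finset.eq_of_subset_of_card_le hsub (by omega)
    have hζF : ζu ∈ F := by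
      simp only [F, Finset.mem_filter, Finset.mem_univ, true_and]
      exact Units.ext (by simpa using hζm)
    rw [← hFeq, Set.mem_toFinset] at hζF
    exact hζF
  obtain ⟨g0, hg0⟩ := hζu_mem
  -- the fiber is in bijection with the kernel
  have hker : Nat.card χ.ker = m := by
    have h1 : Nat.card (Multiplicative S) = Nat.card (Multiplicative S ⧸ χ.ker) * Nat.card χ.ker :=
      Subgroup.card_eq_card_quotient_mul_card_subgroup χ.ker
    have h2 : Nat.card (Multiplicative S ⧸ χ.ker) = t :=
      Nat.card_congr (QuotientGroup.quotientKerEquivRange χ).toEquiv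
    have h3 : Nat.card (Multiplicative S) = m * m := by
      rw [← hSm]
      exact Nat.card_congr (Multiplicative.ofAdd.symm.trans (Equiv.subtypeEquivRight (fun P => Iff.rfl)).symm)
    rw [h3, h2, htm'] at h1
    exact (Nat.eq_of_mul_eq_mul_left hm h1.symm)
  -- identify the fiber
  have hiff : ∀ P : G, (addOrderOf P = m ∧ e P R = ζ) ↔ (m • P = 0 ∧ e P R = ζ) := by
    intro P
    constructor
    · rintro ⟨h1, h2⟩
      refine ⟨?_, h2⟩
      rw [← h1]
      exact addOrderOf_nsmul_eq_zero P
    · rintro ⟨h1, h2⟩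
      refine ⟨?_, h2⟩
      have ho : addOrderOf P ∣ m := addOrderOf_dvd_of_nsmul_eq_zero h1
      have hz : ζ ^ addOrderOf P = 1 := by
        rw [← h2, ← hpow_left _ _ _ h1 hmR, addOrderOf_nsmul_eq_zero P, he0 R hmR]
      have : m ∣ addOrderOf P := hζ ▸ orderOf_dvd_of_pow_eq_one hz
      exact Nat.dvd_antisymm ho this
  have e1 : {P : G // addOrderOf P = m ∧ e P R = ζ} ≃ {g : Multiplicative S // χ g = ζu} := by
    refine (Equiv.subtypeEquivRight hiff).trans ?_
    refine ⟨fun P => ⟨Multiplicative.ofAdd ⟨P.1, P.2.1⟩, Units.ext P.2.2⟩,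
      fun g => ⟨(g.1.toAdd).1, ⟨(g.1.toAdd).2, ?_⟩⟩, fun P => rfl, fun g => rfl⟩
    have := congrArg Units.val g.2
    exact this
  have e2 : {g : Multiplicative S // χ g = ζu} ≃ χ.ker := by
    refine ⟨fun x => ⟨g0⁻¹ * x.1, ?_⟩, fun k => ⟨g0 * k.1, ?_⟩, ?_, ?_⟩
    · rw [MonoidHom.mem_ker, map_mul, map_inv, hg0, x.2, inv_mul_cancel]
    · rw [map_mul, MonoidHom.mem_ker.mp k.2, mul_one, hg0]
    · intro x; apply Subtype.ext; simp
    · intro k; apply Subtype.ext; simp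
  rw [Nat.card_congr (e1.trans e2), hker]

end Fiber

open WeierstrassCurve WeierstrassCurve.Affine

instance pointFinite {R : Type*} [CommRing R] [Finite R] (W : WeierstrassCurve.Affine R) :
    Finite W.Point := by
  let f : W.Point → Unit ⊕ (R × R) := fun P => match P with
    | .zero => Sum.inl ()
    | @Point.some _ _ _ x y _ => Sum.inr (x, y)
  have hf : Function.Injective f := by
    intro P Q h
    cases P <;> cases Q <;> simp_all [f]
  exact Finite.of_injective f hf



open Classical in
/-- Lemma 4.2 of Howe's paper (point count on one curve): let `E` be an elliptic
curve over a finite field `F_q`, let `m ∣ d ∣ gcd(n, q−1)`, and suppose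
`E[n](F_q) ≅ (ℤ/dℤ) × (ℤ/nℤ)`.  Let `e_m` be the Weil pairing on the `m`-torsion
(formalized here as any bilinear alternating nondegenerate pairing with values in
the `m`-th roots of unity of `F_q`), and let `ζ_m ∈ F_q` be a primitive `m`-th root
of unity.  Then the number of pairs `(P, Q)` of points of `E(F_q)` with
`ord P = m`, `ord Q = n`, and `e_m(P, (n/m)Q) = ζ_m` equals `m·φ(n)·ψ(n)/ψ(n/d)`. -/
theorem card_pairs_weil_pairing {K : Type*} [Field K] [Fintype K]
    (E : WeierstrassCurve K) [E.IsElliptic]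
    (m d n : ℕ) (hm : 0 < m) (hmd : m ∣ d) (hd : d ∣ Nat.gcd n (Fintype.card K - 1))
    (hn : 0 < n)
    (htor : Nonempty ((torsionSubgroup (E⁄K).Point n) ≃+ ZMod d × ZMod n))
    (e : (E⁄K).Point → (E⁄K).Point → K)
    (hbil_left : ∀ P P' Q : (E⁄K).Point, m • P = 0 → m • P' = 0 → m • Q = 0 →
      e (P + P') Q = e P Q * e P' Q)
    (hbil_right : ∀ P Q Q' : (E⁄K).Point, m • P = 0 → m • Q = 0 → m • Q' = 0 →
      e P (Q + Q') = e P Q * e P Q')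
    (halt : ∀ P : (E⁄K).Point, m • P = 0 → e P P = 1)
    (hnondeg : ∀ P : (E⁄K).Point, m • P = 0 → (∀ Q : (E⁄K).Point, m • Q = 0 → e P Q = 1) → P = 0)
    (ζ : K) (hζ : orderOf ζ = m) :
    (Nat.card {PQ : (E⁄K).Point × (E⁄K).Point //
        addOrderOf PQ.1 = m ∧ addOrderOf PQ.2 = n ∧
          e PQ.1 ((n / m) • PQ.2) = ζ} : ℚ) =
      m * Nat.totient n * psiQ n / psiQ (n / d) := by
  classical
  obtain ⟨φ⟩ := htor
  have hdn : d ∣ n := hd.trans (Nat.gcd_dvd_left n _)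
  have hmn : m ∣ n := hmd.trans hdn
  have hd0 : 0 < d := Nat.pos_of_dvd_of_pos hdn hn
  have hnd0 : 0 < n / d := Nat.div_pos (Nat.le_of_dvd hn hdn) hd0
  -- card of the m-torsion of E(K)
  have hSm : Nat.card {P : (E⁄K).Point // m • P = 0} = m * m := by
    rw [transfer_card_tor φ hmn, prod_torsion_card d n m hd0 hn,
      Nat.gcd_eq_right hmd, Nat.gcd_eq_right hmn]
  -- order of (n/m) • Q
  have hordR : ∀ Q : (E⁄K).Point, addOrderOf Q = n → addOrderOf ((n / m) • Q) = m := by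
    intro Q hQ
    rw [addOrderOf_nsmul, hQ, Nat.gcd_eq_right (Nat.div_dvd_of_dvd hmn),
      Nat.div_div_self hmn hn.ne']
  -- fiber counts
  have hfib : ∀ Q : {Q : (E⁄K).Point // addOrderOf Q = n},
      Nat.card {P : (E⁄K).Point // addOrderOf P = m ∧ e P ((n / m) • Q.1) = ζ} = m := by
    intro Q
    exact fiber_count hm e hbil_left hbil_right halt hnondeg hSm ζ hζ _ (hordR Q.1 Q.2)
  -- sigma decomposition
  have esig : {PQ : (E⁄K).Point × (E⁄K).Point // addOrderOf PQ.1 = m ∧ addOrderOf PQ.2 = n ∧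
        e PQ.1 ((n / m) • PQ.2) = ζ}
      ≃ (Q : {Q : (E⁄K).Point // addOrderOf Q = n}) ×
          {P : (E⁄K).Point // addOrderOf P = m ∧ e P ((n / m) • Q.1) = ζ} :=
    ⟨fun x => ⟨⟨x.1.2, x.2.2.1⟩, ⟨x.1.1, x.2.1, x.2.2.2⟩⟩,
     fun s => ⟨(s.2.1, s.1.1), s.2.2.1, s.1.2, s.2.2.2⟩,
     fun x => rfl, fun s => rfl⟩
  letI : Fintype {Q : (E⁄K).Point // addOrderOf Q = n} := Fintype.ofFinite _
  letI : ∀ Q : {Q : (E⁄K).Point // addOrderOf Q = n},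
      Fintype {P : (E⁄K).Point // addOrderOf P = m ∧ e P ((n / m) • Q.1) = ζ} :=
    fun Q => Fintype.ofFinite _
  have htotal : Nat.card {PQ : (E⁄K).Point × (E⁄K).Point // addOrderOf PQ.1 = m ∧ addOrderOf PQ.2 = n ∧
        e PQ.1 ((n / m) • PQ.2) = ζ}
      = Nat.card {Q : (E⁄K).Point // addOrderOf Q = n} * m := by
    rw [Nat.card_congr esig, Nat.card_eq_fintype_card, Fintype.card_sigma]
    have : ∀ Q : {Q : (E⁄K).Point // addOrderOf Q = n},
        Fintype.card {P : (E⁄K).Point // addOrderOf P = m ∧ e P ((n / m) • Q.1) = ζ} = m := by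
      intro Q
      rw [← Nat.card_eq_fintype_card]
      exact hfib Q
    rw [Finset.sum_congr rfl (fun Q _ => this Q), Finset.sum_const, Finset.card_univ,
      smul_eq_mul, Nat.card_eq_fintype_card]
  have hcQ : Nat.card {Q : (E⁄K).Point // addOrderOf Q = n}
      = Nat.card {x : ZMod d × ZMod n // addOrderOf x = n} := transfer_card_ord φ
  have hA := countA n d hn hdn
  rw [htotal, hcQ]
  rw [eq_div_iff (psiQ_pos hnd0).ne']
  push_cast
  linear_combination (m : ℚ) * hA
end

section
/- Fix a positive integer q and a prime ℓ, and a positive integer a; set b = ⌊a/2⌋, c = ⌈a/2⌉. With ŵ as defined (ŵ(m,n) = q·ψ(n/m)/(m·φ(n)·ψ(n))·∏_{p | (gcd(n,q-1)/m)}(1-1/p) for m | gcd(n,q−1), else 0), the sum v̂(ℓ^a) = ∑_{d | gcd(ℓ^c, q-1)} ŵ(d, ℓ^a/gcd(d, ℓ^b)) satisfies: v̂(ℓ^a)/q = 1/(ℓ^{a-1}(ℓ-1)) if q ≢ 1 mod ℓ^c, and v̂(ℓ^a)/q = (ℓ^{b+1}+ℓ^b-1)/(ℓ^{a+b-1}(ℓ^2-1))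 if q ≡ 1 mod ℓ^c. -/
/-- The approximation `ŵ(m,n)` of Howe's paper: for `m ∣ gcd(n, q-1)`,
`ŵ(m,n) = q·ψ(n/m)/(m·φ(n)·ψ(n)) · ∏_{p ∣ gcd(n,q-1)/m} (1 - 1/p)`, and `0` otherwise. -/
def wHat (q m n : ℕ) : ℚ :=
  if m ∣ Nat.gcd n (q - 1) then
    q * psiQ (n / m) / (m * Nat.totient n * psiQ n) *
      ∏ p ∈ (Nat.gcd n (q - 1) / m).primeFactors, (1 - 1 / (p : ℚ))
  else 0

/-- The approximation `v̂` on prime powers: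
`v̂(ℓ^a) = ∑_{d ∣ gcd(ℓ^c, q-1)} ŵ(d, ℓ^a / gcd(d, ℓ^b))` with `b = ⌊a/2⌋`, `c = ⌈a/2⌉`. -/
def vHat (q ℓ a : ℕ) : ℚ :=
  ∑ d ∈ (Nat.gcd (ℓ ^ ((a + 1) / 2)) (q - 1)).divisors,
    wHat q d (ℓ ^ a / Nat.gcd d (ℓ ^ (a / 2)))

lemma psiQ_prime_pow_s14 {ℓ : ℕ} (hℓ : ℓ.Prime) (j : ℕ) :
    psiQ (ℓ ^ j) = if j = 0 then 1 else (ℓ:ℚ)^j * (1 + 1/(ℓ:ℚ)) := by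
  rcases eq_or_ne j 0 with rfl | hj
  · simp [psiQ]
  · rw [psiQ, Nat.primeFactors_prime_pow hj hℓ, Finset.prod_singleton, if_neg hj]
    push_cast
    ring

lemma gcd_prime_pow_s14 {q ℓ : ℕ} (hq : 2 ≤ q) (hℓ : ℓ.Prime) (k : ℕ) :
    Nat.gcd (ℓ ^ k) (q - 1) = ℓ ^ min k ((q-1).factorization ℓ) := by
  have hq1 : q - 1 ≠ 0 := by omega
  obtain ⟨j, hjk, hj⟩ := (Nat.dvd_prime_pow hℓ).mp (Nat.gcd_dvd_left (ℓ^k) (q-1))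
  have h2 : (Nat.gcd (ℓ^k) (q-1)).factorization ℓ = min k ((q-1).factorization ℓ) := by
    rw [Nat.factorization_gcd (pow_ne_zero k hℓ.ne_zero) hq1, Finsupp.inf_apply,
      hℓ.factorization_pow, Finsupp.single_eq_same]
  rw [hj] at h2 ⊢
  rw [hℓ.factorization_pow, Finsupp.single_eq_same] at h2
  rw [h2]

lemma wHat_prime_pow {q ℓ : ℕ} (hq : 2 ≤ q) (hℓ : ℓ.Prime) {i k : ℕ} (hk : 1 ≤ k)
    (hik : i ≤ k) (hiv : i ≤ (q-1).factorization ℓ) :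
    wHat q (ℓ^i) (ℓ^k) = q * psiQ (ℓ^(k-i)) /
      ((ℓ:ℚ)^i * ((ℓ:ℚ)^(k-1) * ((ℓ:ℚ)-1)) * psiQ (ℓ^k)) *
      (if i < min k ((q-1).factorization ℓ) then 1 - 1/(ℓ:ℚ) else 1) := by
  set v := (q-1).factorization ℓ with hv
  have hgcd := gcd_prime_pow_s14 hq hℓ (q := q) k
  have hdvd : ℓ^i ∣ ℓ^(min k v) := pow_dvd_pow _ (le_min hik hiv)
  rw [wHat, hgcd, if_pos hdvd, Nat.pow_div hik hℓ.pos,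
    Nat.pow_div (le_min hik hiv) hℓ.pos, Nat.totient_prime_pow hℓ hk]
  rcases lt_or_ge i (min k v) with h | h
  · rw [if_pos h, Nat.primeFactors_prime_pow (Nat.sub_ne_zero_of_lt h) hℓ,
      Finset.prod_singleton]
    push_cast [Nat.cast_sub hℓ.one_lt.le]
    ring
  · have h0 : min k v - i = 0 := by omega
    rw [if_neg (not_lt.mpr h), h0, pow_zero]
    norm_num
    push_cast [Nat.cast_sub hℓ.one_lt.le]
    ring


set_option maxHeartbeats 1000000 in
/-- Closed-form evaluation of `v̂(ℓ^a)/q` (equation (10) of Howe's paper):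
it is `1/(ℓ^{a-1}(ℓ-1))` if `q ≢ 1 mod ℓ^c`, and
`(ℓ^{b+1}+ℓ^b-1)/(ℓ^{a+b-1}(ℓ²-1))` if `q ≡ 1 mod ℓ^c`, where `b = ⌊a/2⌋`, `c = ⌈a/2⌉`. -/
theorem vHat_eval (q : ℕ) (hq : 2 ≤ q) (ℓ : ℕ) (hℓ : ℓ.Prime) (a : ℕ) (ha : 0 < a) :
    (¬ q ≡ 1 [MOD ℓ ^ ((a + 1) / 2)] →
      vHat q ℓ a / q = 1 / ((ℓ : ℚ) ^ (a - 1) * ((ℓ : ℚ) - 1))) ∧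
    (q ≡ 1 [MOD ℓ ^ ((a + 1) / 2)] →
      vHat q ℓ a / q = ((ℓ : ℚ) ^ (a / 2 + 1) + (ℓ : ℚ) ^ (a / 2) - 1) /
        ((ℓ : ℚ) ^ (a + a / 2 - 1) * ((ℓ : ℚ) ^ 2 - 1))) := by
  obtain ⟨b, hb⟩ : ∃ b, a / 2 = b := ⟨_, rfl⟩
  obtain ⟨c, hc⟩ : ∃ c, (a + 1) / 2 = c := ⟨_, rfl⟩
  rw [hb, hc]
  set v := (q-1).factorization ℓ with hv
  set e := min c v with he
  have hec : e ≤ c := min_le_left _ _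
  have hev : e ≤ v := min_le_right _ _
  have hL2 : (2:ℚ) ≤ (ℓ:ℚ) := by exact_mod_cast hℓ.two_le
  have hL0 : (ℓ:ℚ) ≠ 0 := by linarith
  have hL1 : (ℓ:ℚ) - 1 ≠ 0 := by intro h; linarith [sub_eq_zero.mp h]
  have hLp1 : (ℓ:ℚ) + 1 ≠ 0 := by intro h; linarith [eq_neg_of_add_eq_zero_left h]
  have h11 : (1:ℚ) + 1/(ℓ:ℚ) ≠ 0 := by positivity
  have hq0 : (q:ℚ) ≠ 0 := by positivity
  have h1L : (1/(ℓ:ℚ)) ≠ 1 := by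
    intro h
    rw [div_eq_one_iff_eq hL0] at h
    linarith
  have h1L' : (1/(ℓ:ℚ)) - 1 ≠ 0 := sub_ne_zero.mpr h1L
  have hL21 : (ℓ:ℚ)^2 - 1 ≠ 0 := by intro h; nlinarith
  have hmod : (q ≡ 1 [MOD ℓ ^ c]) ↔ e = c := by
    constructor
    · intro h
      have hdvd : ℓ^c ∣ q - 1 := (Nat.modEq_iff_dvd' (by omega)).mp h.symm
      have : c ≤ v := (Nat.Prime.pow_dvd_iff_le_factorization hℓ (by omega)).mp hdvd
      omega
    · intro h
      have : c ≤ v := by omega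
      have hdvd : ℓ^c ∣ q - 1 := (Nat.Prime.pow_dvd_iff_le_factorization hℓ (by omega)).mpr this
      exact ((Nat.modEq_iff_dvd' (by omega)).mpr hdvd).symm
  have hgcd : Nat.gcd (ℓ ^ c) (q-1) = ℓ ^ e := gcd_prime_pow_s14 hq hℓ c
  have hsum : vHat q ℓ a = ∑ i ∈ Finset.range (e+1), wHat q (ℓ^i) (ℓ^(a - min i b)) := by
    rw [vHat, hb, hc, hgcd, Nat.sum_divisors_prime_pow hℓ]
    refine Finset.sum_congr rfl fun i hi => ?_
    congr 2
    have hg : Nat.gcd (ℓ^i) (ℓ^b) = ℓ ^ (min i b) := by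
      rcases le_total i b with h | h
      · rw [min_eq_left h, Nat.gcd_eq_left (pow_dvd_pow _ h)]
      · rw [min_eq_right h, Nat.gcd_eq_right (pow_dvd_pow _ h)]
    rw [hg, Nat.pow_div (by omega) hℓ.pos]
  have hterm : ∀ i < e, wHat q (ℓ^i) (ℓ^(a - min i b)) = q * (1/(ℓ:ℚ))^(a+i) := by
    intro i hie
    have hib : min i b = i := min_eq_left (by omega)
    rw [hib, wHat_prime_pow hq hℓ (by omega) (by omega) (by omega),
      if_pos (by omega : i < min (a-i) v),
      psiQ_prime_pow_s14 hℓ, psiQ_prime_pow_s14 hℓ, if_neg (by omega), if_neg (by omega)]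
    obtain ⟨j, rfl⟩ : ∃ j, a = 2*i+1+j := ⟨a - (2*i+1), by omega⟩
    rw [show 2*i+1+j - i - i = 1+j from by omega, show 2*i+1+j - i - 1 = i+j from by omega,
      show 2*i+1+j - i = i+1+j from by omega, show 2*i+1+j + i = 3*i+1+j from by omega]
    simp only [one_div, inv_pow]
    field_simp
    ring
  have hsum2 : vHat q ℓ a = (∑ i ∈ Finset.range e, (q:ℚ) * (1/(ℓ:ℚ))^(a+i))
      + wHat q (ℓ^e) (ℓ^(a - min e b)) := by
    rw [hsum, Finset.sum_range_succ]
    congr 1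
    exact Finset.sum_congr rfl fun i hi => hterm i (Finset.mem_range.mp hi)
  have hgeom : ∑ i ∈ Finset.range e, (q:ℚ) * (1/(ℓ:ℚ))^(a+i)
      = q * ((ℓ:ℚ)^e - 1) * (ℓ:ℚ) / ((ℓ:ℚ)^a * (ℓ:ℚ)^e * ((ℓ:ℚ)-1)) := by
    have h2 : ∑ i ∈ Finset.range e, (q:ℚ) * (1/(ℓ:ℚ))^(a+i)
        = q * (1/(ℓ:ℚ))^a * (((1/(ℓ:ℚ))^e - 1)/((1/(ℓ:ℚ)) - 1)) := by
      simp_rw [pow_add, ← mul_assoc]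
      rw [← Finset.mul_sum, geom_sum_eq h1L e]
    rw [h2, div_pow, div_pow, one_pow, one_pow]
    have h1mL : (1:ℚ) - (ℓ:ℚ) ≠ 0 := by intro h; linarith
    rw [div_sub' (pow_ne_zero e hL0), div_sub' hL0, div_div_div_comm]
    field_simp
    ring
  constructor
  · intro hcon
    have hlt : e < c := by
      rcases lt_or_eq_of_le hec with h | h
      · exact h
      · exact absurd (hmod.mpr h) hcon
    have hveq : v = e := by omega
    have hlast : wHat q (ℓ^e) (ℓ^(a - min e b)) = q * (ℓ:ℚ) / ((ℓ:ℚ)^(a+e) * ((ℓ:ℚ)-1)) := by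
      have heb : min e b = e := min_eq_left (by omega)
      rw [heb, wHat_prime_pow hq hℓ (by omega) (by omega) (by omega),
        if_neg (by omega), psiQ_prime_pow_s14 hℓ, psiQ_prime_pow_s14 hℓ,
        if_neg (by omega), if_neg (by omega)]
      obtain ⟨j, rfl⟩ : ∃ j, a = 2*e+1+j := ⟨a - (2*e+1), by omega⟩
      rw [show 2*e+1+j - e - e = 1+j from by omega, show 2*e+1+j - e - 1 = e+j from by omega,
        show 2*e+1+j - e = e+1+j from by omega, show 2*e+1+j + e = 3*e+1+j from by omega]
      field_simp
      ring
    rw [hsum2, hgeom, hlast]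
    obtain ⟨a', rfl⟩ : ∃ a', a = a'+1 := ⟨a - 1, by omega⟩
    rw [show a'+1-1 = a' from by omega]
    field_simp
    ring
  · intro hcon
    have hec2 : e = c := hmod.mp hcon
    have hbc : b + c = a := by omega
    have hcv : c ≤ v := by omega
    have hlast : wHat q (ℓ^e) (ℓ^(a - min e b)) = q * (ℓ:ℚ)^2 / ((ℓ:ℚ)^(3*c) * ((ℓ:ℚ)^2-1)) := by
      have heb : min e b = b := by omega
      have hab : a - b = c := by omega
      rw [heb, hab, hec2, wHat_prime_pow hq hℓ (by omega) le_rfl hcv,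
        if_neg (by omega), psiQ_prime_pow_s14 hℓ, psiQ_prime_pow_s14 hℓ,
        Nat.sub_self, if_pos rfl, if_neg (by omega)]
      obtain ⟨c', rfl⟩ : ∃ c', c = c'+1 := ⟨c - 1, by omega⟩
      rw [show c'+1-1 = c' from by omega, show 3*(c'+1) = c'+(c'+(c'+3)) from by omega]
      field_simp
      ring
    rw [hsum2, hgeom, hlast, hec2]
    rcases Nat.even_or_odd a with ⟨t, ht⟩ | ⟨t, ht⟩
    · obtain ⟨t', rfl⟩ : ∃ t', t = t'+1 := ⟨t - 1, by omega⟩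
      rw [show a + b - 1 = 3*t'+2 from by omega, show b+1 = t'+2 from by omega,
        show b = t'+1 from by omega, show c = t'+1 from by omega,
        show a = 2*t'+2 from by omega]
      field_simp
      ring
    · rw [show a + b - 1 = 3*t from by omega, show b+1 = t+1 from by omega,
        show b = t from by omega, show c = t+1 from by omega,
        show a = 2*t+1 from by omega]
      field_simp
      ring
end
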